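/- (DREM decoupled regression.) Let ψ : ℝ → EuclideanSpace ℝ (Fin n) be continuous, θ ∈ EuclideanSpace ℝ (Fin n), and ρ > 0. Suppose Φ : ℝ → Matrix (Fin n) (Fin n) ℝ and Y : ℝ → EuclideanSpace ℝ (Fin n) are differentiable with Φ'(t) = −ρ • Φ(t) + vecMulVec (ψ(t)) (ψ(t)) and Y'(t) = −ρ • Y(t) + ⟪ψ(t), θ⟫ • ψ(t) for all t ≥ 0, with Φ(0) = 0 and Y(0) = 0. Then for all t ≥ 0, (Φ(t)).adjugate *ᵥ Y(t) = (Φ(t)).det • θ; i.e., the scalar regression 𝕐(t) = Δ(t) • θ holds with Δ := det Φ and 𝕐 := adj(Φ) Y. -/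

import Mathlib

open Matrix
open scoped RealInnerProductSpace

attribute [local instance] Matrix.normedAddCommGroup Matrix.normedSpace

/-- The underlying plain vector of a point of `EuclideanSpace ℝ (Fin n)`. -/
def ev {n : ℕ} (x : EuclideanSpace ℝ (Fin n)) : Fin n → ℝ :=
  (WithLp.equiv 2 (Fin n → ℝ)) x

lemma ev_hasDerivAt {n : ℕ} {Y : ℝ → EuclideanSpace ℝ (Fin n)} {Y' : EuclideanSpace ℝ (Fin n)}
    {s : ℝ} (h : HasDerivAt Y Y' s) : HasDerivAt (fun u => ev (Y u)) (ev Y') s := by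
  have := ((EuclideanSpace.equiv (Fin n) ℝ).toContinuousLinearMap.hasFDerivAt).comp_hasDerivAt s h
  exact this

lemma mulVec_hasDerivAt {n : ℕ} {Φ : ℝ → Matrix (Fin n) (Fin n) ℝ}
    {Φ' : Matrix (Fin n) (Fin n) ℝ} {s : ℝ} (h : HasDerivAt Φ Φ' s) (v : Fin n → ℝ) :
    HasDerivAt (fun u => Φ u *ᵥ v) (Φ' *ᵥ v) s := by
  let L : Matrix (Fin n) (Fin n) ℝ →ₗ[ℝ] (Fin n → ℝ) :=
    { toFun := fun A => A *ᵥ v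
      map_add' := fun A B => Matrix.add_mulVec A B v
      map_smul' := fun c A => Matrix.smul_mulVec c A v }
  have := (L.toContinuousLinearMap.hasFDerivAt (x := Φ s)).comp_hasDerivAt s h
  exact this

lemma vecMulVec_mulVec' {n : ℕ} (a b v : Fin n → ℝ) :
    vecMulVec a b *ᵥ v = (b ⬝ᵥ v) • a := by
  ext i
  simp only [Matrix.mulVec, Matrix.vecMulVec_apply, dotProduct, Pi.smul_apply, smul_eq_mul,
    Finset.sum_mul]
  exact Finset.sum_congr rfl fun x _ => by ring

/-- DREM decoupled regression: premultiplying the Kreisselmeier extended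
regression `Y = Φθ` by `adj(Φ)` decouples it into scalar regressions
`𝕐 = Δ θ` with `Δ = det Φ` and `𝕐 = adj(Φ) Y`. -/
theorem stmt16 {n : ℕ} (ψ : ℝ → EuclideanSpace ℝ (Fin n)) (hψ : Continuous ψ)
    (θ : EuclideanSpace ℝ (Fin n)) (ρ : ℝ) (hρ : 0 < ρ)
    (Φ : ℝ → Matrix (Fin n) (Fin n) ℝ)
    (Y : ℝ → EuclideanSpace ℝ (Fin n))
    (hΦ : Differentiable ℝ Φ) (hY : Differentiable ℝ Y)
    (hΦd : ∀ t ≥ (0:ℝ), deriv Φ t = (-ρ) • Φ t + vecMulVec (ev (ψ t)) (ev (ψ t)))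
    (hYd : ∀ t ≥ (0:ℝ), deriv Y t = (-ρ) • Y t + ⟪ψ t, θ⟫ • ψ t)
    (hΦ0 : Φ 0 = 0) (hY0 : Y 0 = 0) :
    ∀ t ≥ (0:ℝ), (Φ t).adjugate *ᵥ ev (Y t) = (Φ t).det • ev θ := by
  intro t ht
  suffices h : ev (Y t) = Φ t *ᵥ ev θ by
    rw [h, Matrix.mulVec_mulVec, Matrix.adjugate_mul, Matrix.smul_mulVec,
      Matrix.one_mulVec]
  set F : ℝ → (Fin n → ℝ) := fun s => Real.exp (ρ * s) • (ev (Y s) - Φ s *ᵥ ev θ) with hF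
  have hinner : ∀ s, ⟪ψ s, θ⟫ = ev (ψ s) ⬝ᵥ ev θ := by
    intro s
    simp [PiLp.inner_apply, dotProduct, ev, RCLike.inner_apply, starRingEnd_apply]
    exact Finset.sum_congr rfl fun _ _ => mul_comm _ _
  have hFd : ∀ s ≥ (0:ℝ), HasDerivAt F 0 s := by
    intro s hs
    have hY' := (hY s).hasDerivAt
    have hΦ' := (hΦ s).hasDerivAt
    have hZ : HasDerivAt (fun u => ev (Y u) - Φ u *ᵥ ev θ)
        ((-ρ) • (ev (Y s) - Φ s *ᵥ ev θ)) s := by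
      have h1 := ev_hasDerivAt hY'
      have h2 := mulVec_hasDerivAt hΦ' (ev θ)
      have h3 := h1.sub h2
      rw [hYd s hs] at h3
      erw [hΦd s hs] at h3
      have : ev ((-ρ) • Y s + ⟪ψ s, θ⟫ • ψ s)
          - ((-ρ) • Φ s + vecMulVec (ev (ψ s)) (ev (ψ s))) *ᵥ ev θ
          = (-ρ) • (ev (Y s) - Φ s *ᵥ ev θ) := by
        rw [Matrix.add_mulVec, vecMulVec_mulVec', Matrix.smul_mulVec, ← hinner s]
        have hev : ∀ (x y : EuclideanSpace ℝ (Fin n)) (c d : ℝ),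
            ev (c • x + d • y) = c • ev x + d • ev y := fun _ _ _ _ => rfl
        rw [hev]
        module
      rw [this] at h3
      exact h3
    have hexp : HasDerivAt (fun u => Real.exp (ρ * u)) (ρ * Real.exp (ρ * s)) s := by
      have := ((hasDerivAt_id s).const_mul ρ).exp
      simpa [mul_comm] using this
    have hFder := hexp.smul hZ
    have h0 : Real.exp (ρ * s) • ((-ρ) • (ev (Y s) - Φ s *ᵥ ev θ))
        + (ρ * Real.exp (ρ * s)) • (ev (Y s) - Φ s *ᵥ ev θ) = (0 : Fin n → ℝ) := by
      module
    rw [h0] at hFder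
    exact hFder
  have hcont : ContinuousOn F (Set.Icc 0 t) := by
    have : Differentiable ℝ F := by
      intro s
      exact ((Real.differentiable_exp.comp (differentiable_const ρ |>.mul differentiable_id)) s).smul
        (((hY s).hasDerivAt |> ev_hasDerivAt).differentiableAt.sub
          ((mulVec_hasDerivAt (hΦ s).hasDerivAt (ev θ)).differentiableAt))
    exact this.continuous.continuousOn
  have hconst := constant_of_has_deriv_right_zero hcont (fun s hs =>
    ((hFd s hs.1).hasDerivWithinAt))
  have hFt : F t = F 0 := hconst t ⟨ht, le_refl _⟩
  have hF0 : F 0 = 0 := by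
    have : ev (Y 0) = 0 := by rw [hY0]; rfl
    simp [hF, this, hΦ0, Matrix.zero_mulVec]
  have : Real.exp (ρ * t) • (ev (Y t) - Φ t *ᵥ ev θ) = 0 := by
    rw [← hF0]; exact hFt
  have hne : Real.exp (ρ * t) ≠ 0 := Real.exp_ne_zero _
  have := smul_eq_zero.mp this
  rcases this with h | h
  · exact absurd h hne
  · exact sub_eq_zero.mp h
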